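/- In the set-cover reduction graph for BoundedMax Retrieval with max-retrieval constraint R = 1, any feasible solution can be transformed in polynomial time into another feasible solution with equal or smaller total storage cost in which no element version b_j is materialized (every b_j is retrieved via a stored delta from a set version a_i with o_j ∈ A_i). -/
import Mathlib


/-- Edges of the set-cover reduction graph: set versions `a_i` (left), element
versions `b_j` (right); symmetric unit-cost deltas between distinct set versions,
and between `a_i` and `b_j` whenever element `o_j ∈ A_i` (i.e. `mem i j`). -/
def covEdge {m n : ℕ} (mem : Fin m → Fin n → Prop) :
    Sum (Fin m) (Fin n) → Sum (Fin m) (Fin n) → Prop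
  | Sum.inl i, Sum.inl i' => i ≠ i'
  | Sum.inl i, Sum.inr j => mem i j
  | Sum.inr j, Sum.inl i => mem i j
  | Sum.inr _, Sum.inr _ => False

/-- Structure lemma for BMR with max-retrieval constraint `R = 1` on the set-cover
reduction graph (all materialization costs `N ≥ 1`, all edges of storage and
retrieval cost `1`): any feasible solution — a materialized set `M` together with,
for each non-materialized version, a stored delta from a materialized version —
can be transformed into a feasible solution of equal or smaller total storage cost
`N·|M| + #(non-materialized)` in which no element version is materialized. -/
theorem bmr_no_element_materialized (m n N : ℕ) (hN : 1 ≤ N)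
    (mem : Fin m → Fin n → Prop) (hcov : ∀ j : Fin n, ∃ i : Fin m, mem i j)
    (M : Finset (Sum (Fin m) (Fin n)))
    (par : Sum (Fin m) (Fin n) → Sum (Fin m) (Fin n))
    (hfeas : ∀ v ∉ M, par v ∈ M ∧ covEdge mem (par v) v) :
    ∃ (M' : Finset (Sum (Fin m) (Fin n)))
      (par' : Sum (Fin m) (Fin n) → Sum (Fin m) (Fin n)),
      (∀ v ∉ M', par' v ∈ M' ∧ covEdge mem (par' v) v) ∧
      (∀ j : Fin n, Sum.inr j ∉ M') ∧
      N * M'.card + (Finset.univ \ M').card ≤ N * M.card + (Finset.univ \ M).card := by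

  classical
  have hcmem : ∀ j, mem ((hcov j).choose) j := fun j => (hcov j).choose_spec
  set c : Fin n → Fin m := fun j => (hcov j).choose with hc
  set f : Sum (Fin m) (Fin n) → Sum (Fin m) (Fin n) :=
    fun v => match v with
      | Sum.inl i => Sum.inl i
      | Sum.inr j => Sum.inl (c j) with hf
  refine ⟨M.image f,
    Sum.elim
      (fun i => Sum.elim Sum.inl (fun j => Sum.inl (c j)) (par (Sum.inl i)))
      (fun j => if Sum.inr j ∈ M then Sum.inl (c j) else par (Sum.inr j)),
    ?_, ?_, ?_⟩
  · intro v hv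
    rcases v with i | j
    · have hiM : Sum.inl i ∉ M := by
        intro h; exact hv (Finset.mem_image.mpr ⟨Sum.inl i, h, rfl⟩)
      obtain ⟨hpM, hpe⟩ := hfeas _ hiM
      rcases hp : par (Sum.inl i) with i' | j
      · rw [hp] at hpM hpe
        refine ⟨?_, ?_⟩
        · simp only [Sum.elim_inl, hp, Sum.elim_inl]
          exact Finset.mem_image.mpr ⟨Sum.inl i', hpM, rfl⟩
        · simp only [Sum.elim_inl, hp, Sum.elim_inl]
          exact hpe
      · rw [hp] at hpM hpe
        refine ⟨?_, ?_⟩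
        · simp only [Sum.elim_inl, hp, Sum.elim_inr]
          exact Finset.mem_image.mpr ⟨Sum.inr j, hpM, rfl⟩
        · simp only [Sum.elim_inl, hp, Sum.elim_inr]
          show c j ≠ i
          intro hEq
          exact hv (Finset.mem_image.mpr ⟨Sum.inr j, hpM, by simp [hf, hEq]⟩)
    · by_cases hjM : Sum.inr j ∈ M
      · refine ⟨?_, ?_⟩
        · simp only [Sum.elim_inr, if_pos hjM]
          exact Finset.mem_image.mpr ⟨Sum.inr j, hjM, rfl⟩
        · simp only [Sum.elim_inr, if_pos hjM]
          exact hcmem j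
      · obtain ⟨hpM, hpe⟩ := hfeas _ hjM
        rcases hp : par (Sum.inr j) with i | j'
        · rw [hp] at hpM hpe
          refine ⟨?_, ?_⟩
          · simp only [Sum.elim_inr, if_neg hjM, hp]
            exact Finset.mem_image.mpr ⟨Sum.inl i, hpM, rfl⟩
          · simp only [Sum.elim_inr, if_neg hjM, hp]
            exact hpe
        · rw [hp] at hpe
          exact absurd hpe (by simp [covEdge])
  · intro j hj
    obtain ⟨x, _, hx⟩ := Finset.mem_image.mp hj
    rcases x with i | j' <;> simp [hf] at hx
  · have hab : (M.image f).card ≤ M.card := Finset.card_image_le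
    have hbU : M.card ≤ (Finset.univ : Finset (Sum (Fin m) (Fin n))).card :=
      Finset.card_le_card (Finset.subset_univ M)
    have haU : (M.image f).card ≤ (Finset.univ : Finset (Sum (Fin m) (Fin n))).card :=
      le_trans hab hbU
    rw [Finset.card_sdiff_of_subset (Finset.subset_univ _), Finset.card_sdiff_of_subset (Finset.subset_univ _)]
    obtain ⟨K, rfl⟩ : ∃ K, N = K + 1 := ⟨N - 1, by omega⟩
    set a := (M.image f).card
    set b := M.card
    set U := (Finset.univ : Finset (Sum (Fin m) (Fin n))).card
    have e1 : (K + 1) * a = K * a + a := by ring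
    have e2 : (K + 1) * b = K * b + b := by ring
    have h1 : a + (U - a) = U := by omega
    have h2 : b + (U - b) = U := by omega
    rw [e1, e2, add_assoc, add_assoc, h1, h2]
    exact Nat.add_le_add_right (Nat.mul_le_mul_left K hab) U
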